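/- Let A₃ = {exp(iθ) : π/4 ≤ θ ≤ 7π/4} be the three-quarter arc of the unit circle, and let F be a finite subset of the open quarter arc {exp(iθ) : −π/4 < θ < π/4}. Then the collection of squares inscribed in A₃ ∪ F has cardinality exactly |F| + 1: each point v ∈ F ∪ {exp(iπ/4)} gives the inscribed square {v, i·v, −v, −i·v}, and these are all of them. -/

import Mathlib

open Complex Real Set

/-- A set `S ⊆ ℂ` is a square if it consists of the four points
`p, p + w, p + w + i·w, p + i·w` for some `p` and some `w ≠ 0`. -/
def IsSquarePts (S : Set ℂ) : Prop :=
  ∃ p w : ℂ, w ≠ 0 ∧ S = {p, p + w, p + w + Complex.I * w, p + Complex.I * w}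

/-- The collection of squares inscribed in a set `C ⊆ ℂ`. -/
def InscribedSquares (C : Set ℂ) : Set (Set ℂ) :=
  {S | IsSquarePts S ∧ S ⊆ C}

lemma exp_I_eq_iff {a b : ℝ} (h : Complex.exp (a * Complex.I) = Complex.exp (b * Complex.I)) :
    ∃ n : ℤ, a - b = n * (2 * π) := by
  have h1 : Complex.exp ((a - b : ℝ) * Complex.I) = 1 := by
    rw [show ((a - b : ℝ) : ℂ) = (a : ℂ) - b by push_cast; ring, sub_mul,
      Complex.exp_sub, h, div_self (Complex.exp_ne_zero _)]
  obtain ⟨n, hn⟩ := Complex.exp_eq_one_iff.mp h1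
  refine ⟨n, ?_⟩
  rw [show (n:ℂ) * (2 * ↑π * Complex.I) = ((n:ℂ) * (2 * ↑π)) * Complex.I by ring] at hn
  have := mul_right_cancel₀ Complex.I_ne_zero hn
  exact_mod_cast this

lemma exp_I_eq_self {a b : ℝ} (h : Complex.exp (a * Complex.I) = Complex.exp (b * Complex.I))
    (hab : |a - b| < 2 * π) : a = b := by
  obtain ⟨n, hn⟩ := exp_I_eq_iff h
  have hπ : (0:ℝ) < 2 * π := by positivity
  have h2 : |(n:ℝ)| * (2 * π) < 2 * π := by
    have : |(n:ℝ) * (2 * π)| < 2 * π := by rw [← hn]; exact hab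
    rwa [abs_mul, abs_of_pos hπ] at this
  have hn1 : |(n:ℝ)| < 1 := by nlinarith [abs_nonneg ((n:ℝ))]
  have hn2 : -1 < n ∧ n < 1 := by
    have := abs_lt.mp hn1
    constructor <;> [exact_mod_cast this.1; exact_mod_cast this.2]
  have : n = 0 := by omega
  subst this
  have : a - b = 0 := by simpa using hn
  linarith

lemma square_on_circle {p w : ℂ} (hw : w ≠ 0)
    (h1 : ‖p‖ = 1) (h2 : ‖p + w‖ = 1)
    (h3 : ‖p + w + Complex.I * w‖ = 1)
    (h4 : ‖p + Complex.I * w‖ = 1) :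
    w = Complex.I * p - p := by
  have e1 : normSq p = 1 := by rw [normSq_eq_norm_sq, h1]; norm_num
  have e2 : normSq (p + w) = 1 := by rw [normSq_eq_norm_sq, h2]; norm_num
  have e3 : normSq (p + w + Complex.I * w) = 1 := by rw [normSq_eq_norm_sq, h3]; norm_num
  have e4 : normSq (p + Complex.I * w) = 1 := by rw [normSq_eq_norm_sq, h4]; norm_num
  simp only [normSq_apply, Complex.add_re, Complex.add_im, Complex.mul_re, Complex.mul_im,
    Complex.I_re, Complex.I_im] at e1 e2 e3 e4
  have hw' : w.re ^ 2 + w.im ^ 2 ≠ 0 := by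
    intro hc
    apply hw
    have : w.re = 0 ∧ w.im = 0 := by constructor <;> nlinarith [sq_nonneg w.re, sq_nonneg w.im]
    exact Complex.ext this.1 this.2
  set a := 2 * p.re + w.re - w.im with ha
  set b := 2 * p.im + w.im + w.re with hb
  have hA : a * w.re + b * w.im = 0 := by linear_combination e2 - e1
  have hB : a * (-w.im) + b * w.re = 0 := by linear_combination e4 - e1
  have haz : a = 0 := by
    have : a * (w.re ^ 2 + w.im ^ 2) = 0 := by linear_combination w.re * hA - w.im * hB
    exact (mul_eq_zero.mp this).resolve_right hw'
  have hbz : b = 0 := by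
    have : b * (w.re ^ 2 + w.im ^ 2) = 0 := by linear_combination w.im * hA + w.re * hB
    exact (mul_eq_zero.mp this).resolve_right hw'
  apply Complex.ext <;>
    simp only [Complex.sub_re, Complex.sub_im, Complex.mul_re, Complex.mul_im,
      Complex.I_re, Complex.I_im] <;> [linarith [haz, hbz]; linarith [haz, hbz]]

lemma exp_add_I (a b : ℝ) :
    Complex.exp (((a + b : ℝ)) * Complex.I) =
      Complex.exp ((a:ℝ) * Complex.I) * Complex.exp ((b:ℝ) * Complex.I) := by
  rw [← Complex.exp_add]; push_cast; ring_nf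

lemma cPiDivTwo : Complex.exp (((π/2 : ℝ)) * Complex.I) = Complex.I := by
  rw [Complex.exp_mul_I, ← Complex.ofReal_cos, ← Complex.ofReal_sin,
    Real.cos_pi_div_two, Real.sin_pi_div_two]
  simp

lemma cPi : Complex.exp (((π : ℝ)) * Complex.I) = -1 := by
  rw [Complex.exp_mul_I, ← Complex.ofReal_cos, ← Complex.ofReal_sin,
    Real.cos_pi, Real.sin_pi]
  simp

lemma cThreePiDivTwo : Complex.exp (((3*π/2 : ℝ)) * Complex.I) = -Complex.I := by
  have h : (3*π/2 : ℝ) = π + π/2 := by ring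
  rw [h, exp_add_I, cPi, cPiDivTwo]
  ring

lemma sq4_rot (v : ℂ) :
    ({Complex.I * v, Complex.I * (Complex.I * v), -(Complex.I * v),
        -(Complex.I * (Complex.I * v))} : Set ℂ) =
      {v, Complex.I * v, -v, -(Complex.I * v)} := by
  have h : Complex.I * (Complex.I * v) = -v := by linear_combination v * Complex.I_sq
  rw [h, neg_neg]
  ext z
  simp only [Set.mem_insert_iff, Set.mem_singleton_iff]
  tauto

/-- If `A₃` is the three-quarter arc `{exp(iθ) : π/4 ≤ θ ≤ 7π/4}` of the unit
circle and `F` is a finite subset of the open quarter arc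
`{exp(iθ) : −π/4 < θ < π/4}`, then the squares inscribed in `A₃ ∪ F` are
exactly the squares `{v, i·v, −v, −i·v}` for `v ∈ F ∪ {exp(iπ/4)}`, and there
are exactly `|F| + 1` of them. -/
theorem inscribed_squares_of_arc_union_finite (F : Finset ℂ)
    (hF : (F : Set ℂ) ⊆
      {z : ℂ | ∃ θ : ℝ, -(π / 4) < θ ∧ θ < π / 4 ∧
        z = Complex.exp (θ * Complex.I)}) :
    InscribedSquares
        ({z : ℂ | ∃ θ : ℝ, π / 4 ≤ θ ∧ θ ≤ 7 * π / 4 ∧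
            z = Complex.exp (θ * Complex.I)} ∪ (F : Set ℂ)) =
      (fun v : ℂ => ({v, Complex.I * v, -v, -(Complex.I * v)} : Set ℂ)) ''
        (insert (Complex.exp ((π / 4 : ℝ) * Complex.I)) (F : Set ℂ)) ∧
    (InscribedSquares
        ({z : ℂ | ∃ θ : ℝ, π / 4 ≤ θ ∧ θ ≤ 7 * π / 4 ∧
            z = Complex.exp (θ * Complex.I)} ∪ (F : Set ℂ))).ncard =
      F.card + 1 := by
  have pi_pos := Real.pi_pos
  set A3 : Set ℂ := {z : ℂ | ∃ θ : ℝ, π / 4 ≤ θ ∧ θ ≤ 7 * π / 4 ∧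
      z = Complex.exp (θ * Complex.I)} with hA3
  set C : Set ℂ := A3 ∪ (F : Set ℂ) with hC
  set e : ℂ := Complex.exp ((π / 4 : ℝ) * Complex.I) with he
  -- every point of C is on the unit circle
  have habsC : ∀ z ∈ C, ‖z‖ = 1 := by
    rintro z (⟨θ, _, _, rfl⟩ | hz)
    · exact Complex.norm_exp_ofReal_mul_I θ
    · obtain ⟨θ, _, _, rfl⟩ := hF hz
      exact Complex.norm_exp_ofReal_mul_I θ
  have hmemA3 : ∀ θ : ℝ, π / 4 ≤ θ → θ ≤ 7 * π / 4 → Complex.exp (θ * Complex.I) ∈ C :=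
    fun θ h1 h2 => Or.inl ⟨θ, h1, h2, rfl⟩
  -- representation of elements of insert e F
  have hrep : ∀ v ∈ insert e (F : Set ℂ),
      ∃ ψ : ℝ, -(π/4) < ψ ∧ ψ ≤ π/4 ∧ v = Complex.exp (ψ * Complex.I) ∧ v ∈ C := by
    rintro v (rfl | hv)
    · exact ⟨π/4, by linarith, le_refl _, rfl, hmemA3 _ (le_refl _) (by linarith)⟩
    · obtain ⟨θ, hθ1, hθ2, hθ⟩ := hF hv
      exact ⟨θ, hθ1, le_of_lt hθ2, hθ, Or.inr hv⟩
  -- a point exp(ψ I) with ψ ∈ (-π/4, π/4] that lies in C is in insert e F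
  have hkey : ∀ ψ : ℝ, -(π/4) < ψ → ψ ≤ π/4 → Complex.exp (ψ * Complex.I) ∈ C →
      Complex.exp (ψ * Complex.I) ∈ insert e (F : Set ℂ) := by
    intro ψ hψ1 hψ2 hmem
    rcases hmem with ⟨θ, h1, h2, hθ⟩ | h
    · have hθψ : θ = ψ := exp_I_eq_self hθ.symm (by rw [abs_lt]; constructor <;> linarith)
      left
      rw [he]
      congr 1
      have : ψ = π/4 := le_antisymm hψ2 (hθψ ▸ h1)
      rw [this]
    · exact Or.inr h
  -- main set equality
  have hset : InscribedSquares C =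
      (fun v : ℂ => ({v, Complex.I * v, -v, -(Complex.I * v)} : Set ℂ)) ''
        (insert e (F : Set ℂ)) := by
    ext S
    constructor
    · rintro ⟨⟨p, w, hw, rfl⟩, hsub⟩
      have h1 : ‖p‖ = 1 := habsC _ (hsub (by simp))
      have h2 : ‖p + w‖ = 1 := habsC _ (hsub (by simp))
      have h3 : ‖p + w + Complex.I * w‖ = 1 := habsC _ (hsub (by simp))
      have h4 : ‖p + Complex.I * w‖ = 1 := habsC _ (hsub (by simp))
      have hwp : w = Complex.I * p - p := square_on_circle hw h1 h2 h3 h4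
      have a2 : p + (Complex.I * p - p) = Complex.I * p := by ring
      have a3 : Complex.I * p + Complex.I * (Complex.I * p - p) = -p := by
        linear_combination p * Complex.I_sq
      have a4 : p + Complex.I * (Complex.I * p - p) = -(Complex.I * p) := by
        linear_combination p * Complex.I_sq
      have hSeq : ({p, p + w, p + w + Complex.I * w, p + Complex.I * w} : Set ℂ) =
          {p, Complex.I * p, -p, -(Complex.I * p)} := by
        rw [hwp, a2, a3, a4]
      rw [hSeq]
      rw [hSeq] at hsub
      -- find canonical representative
      have hp : Complex.exp ((arg p : ℝ) * Complex.I) = p := by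
        have := Complex.norm_mul_exp_arg_mul_I p
        rwa [h1, Complex.ofReal_one, one_mul] at this
      have hφ1 : -π < arg p := Complex.neg_pi_lt_arg p
      have hφ2 : arg p ≤ π := Complex.arg_le_pi p
      set φ := arg p with hφ
      have hIIp : Complex.I * (Complex.I * p) = -p := by linear_combination p * Complex.I_sq
      have hIIIp : Complex.I * (-(Complex.I * p)) = p := by
        linear_combination (-p) * Complex.I_sq
      obtain ⟨ψ, hψ1, hψ2, hsetEq⟩ : ∃ ψ : ℝ, -(π/4) < ψ ∧ ψ ≤ π/4 ∧
          ({Complex.exp (ψ * Complex.I), Complex.I * Complex.exp (ψ * Complex.I),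
            -Complex.exp (ψ * Complex.I), -(Complex.I * Complex.exp (ψ * Complex.I))} : Set ℂ)
          = {p, Complex.I * p, -p, -(Complex.I * p)} := by
        rcases le_or_gt φ (-(3*π/4)) with hc | hc
        · -- ψ = φ + π, v = -p
          refine ⟨φ + π, by linarith, by linarith, ?_⟩
          have hv : Complex.exp (((φ + π : ℝ)) * Complex.I) = -p := by
            rw [exp_add_I, hp, cPi]; ring
          rw [hv]
          calc ({-p, Complex.I * -p, -(-p), -(Complex.I * -p)} : Set ℂ)
              = {Complex.I * (Complex.I * p), Complex.I * (Complex.I * (Complex.I * p)),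
                  -(Complex.I * (Complex.I * p)),
                  -(Complex.I * (Complex.I * (Complex.I * p)))} := by rw [hIIp]
            _ = {Complex.I * p, Complex.I * (Complex.I * p), -(Complex.I * p),
                  -(Complex.I * (Complex.I * p))} := sq4_rot _
            _ = {p, Complex.I * p, -p, -(Complex.I * p)} := sq4_rot _
        · rcases le_or_gt φ (-(π/4)) with hc2 | hc2
          · -- ψ = φ + π/2, v = I p
            refine ⟨φ + π/2, by linarith, by linarith, ?_⟩
            have hv : Complex.exp (((φ + π/2 : ℝ)) * Complex.I) = Complex.I * p := by
              rw [exp_add_I, hp, cPiDivTwo]; ring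
            rw [hv]
            exact sq4_rot p
          · rcases le_or_gt φ (π/4) with hc3 | hc3
            · -- ψ = φ, v = p
              exact ⟨φ, hc2, hc3, by rw [hp]⟩
            · rcases le_or_gt φ (3*π/4) with hc4 | hc4
              · -- ψ = φ - π/2, v = -(I p)
                refine ⟨φ - π/2, by linarith, by linarith, ?_⟩
                have hv : Complex.exp (((φ - π/2 : ℝ)) * Complex.I) = -(Complex.I * p) := by
                  have : (φ - π/2 : ℝ) = φ + (3*π/2) + (-(2*π)) := by ring
                  rw [this, exp_add_I, exp_add_I, hp, cThreePiDivTwo]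
                  have h2pi : Complex.exp (((-(2*π) : ℝ)) * Complex.I) = 1 := by
                    rw [Complex.exp_eq_one_iff]
                    exact ⟨-1, by push_cast; ring⟩
                  rw [h2pi]; ring
                rw [hv]
                calc ({-(Complex.I * p), Complex.I * -(Complex.I * p), -(-(Complex.I * p)),
                      -(Complex.I * -(Complex.I * p))} : Set ℂ)
                    = {Complex.I * (Complex.I * (Complex.I * p)),
                        Complex.I * (Complex.I * (Complex.I * (Complex.I * p))),
                        -(Complex.I * (Complex.I * (Complex.I * p))),
                        -(Complex.I * (Complex.I * (Complex.I * (Complex.I * p))))} := by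
                        rw [show Complex.I * (Complex.I * (Complex.I * p)) = -(Complex.I*p) by
                          linear_combination (Complex.I * p) * Complex.I_sq]
                  _ = {Complex.I * (Complex.I * p), Complex.I * (Complex.I * (Complex.I * p)),
                        -(Complex.I * (Complex.I * p)),
                        -(Complex.I * (Complex.I * (Complex.I * p)))} := sq4_rot _
                  _ = {Complex.I * p, Complex.I * (Complex.I * p), -(Complex.I * p),
                        -(Complex.I * (Complex.I * p))} := sq4_rot _
                  _ = {p, Complex.I * p, -p, -(Complex.I * p)} := sq4_rot _
              · -- ψ = φ - π, v = -p
                refine ⟨φ - π, by linarith, by linarith, ?_⟩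
                have hv : Complex.exp (((φ - π : ℝ)) * Complex.I) = -p := by
                  have : (φ - π : ℝ) = φ + π + (-(2*π)) := by ring
                  rw [this, exp_add_I, exp_add_I, hp, cPi]
                  have h2pi : Complex.exp (((-(2*π) : ℝ)) * Complex.I) = 1 := by
                    rw [Complex.exp_eq_one_iff]
                    exact ⟨-1, by push_cast; ring⟩
                  rw [h2pi]; ring
                rw [hv]
                calc ({-p, Complex.I * -p, -(-p), -(Complex.I * -p)} : Set ℂ)
                    = {Complex.I * (Complex.I * p), Complex.I * (Complex.I * (Complex.I * p)),
                        -(Complex.I * (Complex.I * p)),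
                        -(Complex.I * (Complex.I * (Complex.I * p)))} := by rw [hIIp]
                  _ = {Complex.I * p, Complex.I * (Complex.I * p), -(Complex.I * p),
                        -(Complex.I * (Complex.I * p))} := sq4_rot _
                  _ = {p, Complex.I * p, -p, -(Complex.I * p)} := sq4_rot _
      -- the canonical representative is in C, hence in insert e F
      have hvC : Complex.exp (ψ * Complex.I) ∈ C := by
        apply hsub
        rw [← hsetEq]
        simp
      exact ⟨Complex.exp (ψ * Complex.I), hkey ψ hψ1 hψ2 hvC, hsetEq⟩
    · rintro ⟨v, hv, rfl⟩
      obtain ⟨ψ, hψ1, hψ2, hveq, hvC⟩ := hrep v hv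
      have hv0 : v ≠ 0 := by rw [hveq]; exact Complex.exp_ne_zero _
      constructor
      · refine ⟨v, Complex.I * v - v, ?_, ?_⟩
        · intro hcon
          apply hv0
          have : (Complex.I - 1) * v = 0 := by linear_combination hcon
          rcases mul_eq_zero.mp this with h | h
          · have : Complex.I = 1 := sub_eq_zero.mp h
            simpa using congrArg Complex.im this
          · exact h
        · have a2 : v + (Complex.I * v - v) = Complex.I * v := by ring
          have a3 : Complex.I * v + Complex.I * (Complex.I * v - v) = -v := by
            linear_combination v * Complex.I_sq
          have a4 : v + Complex.I * (Complex.I * v - v) = -(Complex.I * v) := by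
            linear_combination v * Complex.I_sq
          rw [a2, a3, a4]
      · intro z hz
        have hIv : Complex.I * v = Complex.exp (((ψ + π/2 : ℝ)) * Complex.I) := by
          rw [exp_add_I, ← hveq, cPiDivTwo]; ring
        have hNv : -v = Complex.exp (((ψ + π : ℝ)) * Complex.I) := by
          rw [exp_add_I, ← hveq, cPi]; ring
        have hNIv : -(Complex.I * v) = Complex.exp (((ψ + 3*π/2 : ℝ)) * Complex.I) := by
          rw [exp_add_I, ← hveq, cThreePiDivTwo]; ring
        rcases hz with rfl | rfl | rfl | rfl
        · exact hvC
        · rw [hIv]; exact hmemA3 _ (by linarith) (by linarith)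
        · rw [hNv]; exact hmemA3 _ (by linarith) (by linarith)
        · rw [hNIv]; exact hmemA3 _ (by linarith) (by linarith)
  refine ⟨hset, ?_⟩
  rw [hset]
  -- injectivity
  have hinj : Set.InjOn (fun v : ℂ => ({v, Complex.I * v, -v, -(Complex.I * v)} : Set ℂ))
      (insert e (F : Set ℂ)) := by
    intro x hx y hy hxy
    obtain ⟨a, ha1, ha2, hax, -⟩ := hrep x hx
    obtain ⟨b, hb1, hb2, hbx, -⟩ := hrep y hy
    simp only at hxy
    have hymem : y ∈ ({x, Complex.I * x, -x, -(Complex.I * x)} : Set ℂ) := by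
      rw [hxy]; simp
    have hIx : Complex.I * x = Complex.exp (((a + π/2 : ℝ)) * Complex.I) := by
      rw [exp_add_I, ← hax, cPiDivTwo]; ring
    have hNx : -x = Complex.exp (((a + π : ℝ)) * Complex.I) := by
      rw [exp_add_I, ← hax, cPi]; ring
    have hNIx : -(Complex.I * x) = Complex.exp (((a + 3*π/2 : ℝ)) * Complex.I) := by
      rw [exp_add_I, ← hax, cThreePiDivTwo]; ring
    rcases hymem with rfl | h | h | h
    · rfl
    · exfalso
      rw [hbx, hIx] at h
      have := exp_I_eq_self h (by rw [abs_lt]; constructor <;> linarith)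
      linarith
    · exfalso
      rw [hbx, hNx] at h
      have := exp_I_eq_self h (by rw [abs_lt]; constructor <;> linarith)
      linarith
    · exfalso
      rw [hbx, hNIx] at h
      have := exp_I_eq_self h (by rw [abs_lt]; constructor <;> linarith)
      linarith
  rw [Set.ncard_image_of_injOn hinj]
  have hnotmem : e ∉ (F : Set ℂ) := by
    intro hcon
    obtain ⟨θ, hθ1, hθ2, hθ⟩ := hF hcon
    have : (π/4 : ℝ) = θ := exp_I_eq_self (hθ ▸ rfl) (by rw [abs_lt]; constructor <;> linarith)
    linarith
  rw [Set.ncard_insert_of_notMem hnotmem (F.finite_toSet), Set.ncard_coe_finset]
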